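/- Let A ⊆ B(X) be an abelian, unital, norm-closed algebra of operators on a Banach space X such that X = X₁ ⊕ X₂ where X₁ = Ax₁ and X₂ = Ax₂ are closed subspaces for some x₁, x₂ ∈ X. Let I₁ = {a ∈ A : ax₁ = 0} and I₂ = {a ∈ A : ax₂ = 0}. Then I₁ + I₂ is a closed subspace of A. -/

import Mathlib

set_option maxHeartbeats 1000000
set_option synthInstance.maxHeartbeats 400000

/-- If `A ⊆ B(X)` is an abelian, unital, norm-closed operator algebra on a Banach
space `X` with `X = Ax₁ ⊕ Ax₂` (both orbits closed), then `I₁ + I₂` is closed,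
where `Iⱼ = {a ∈ A : a xⱼ = 0}`. -/
theorem stmt1 {X : Type*} [NormedAddCommGroup X] [NormedSpace ℂ X] [CompleteSpace X]
    (A : Subalgebra ℂ (X →L[ℂ] X))
    (hA : IsClosed (A : Set (X →L[ℂ] X)))
    (hcomm : ∀ a ∈ A, ∀ b ∈ A, a * b = b * a)
    (x₁ x₂ : X)
    (hc1 : IsClosed {y : X | ∃ a ∈ A, a x₁ = y})
    (hc2 : IsClosed {y : X | ∃ a ∈ A, a x₂ = y})
    (hspan : ∀ y : X, ∃ a ∈ A, ∃ b ∈ A, y = a x₁ + b x₂)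
    (hind : ∀ a ∈ A, ∀ b ∈ A, a x₁ + b x₂ = 0 → a x₁ = 0 ∧ b x₂ = 0) :
    IsClosed {c : X →L[ℂ] X | ∃ a ∈ A, ∃ b ∈ A, a x₁ = 0 ∧ b x₂ = 0 ∧ c = a + b} := by
  classical
  set E : Submodule ℂ (X →L[ℂ] X) := Subalgebra.toSubmodule A with hE
  haveI : CompleteSpace E := hA.completeSpace_coe
  set f1 : E →L[ℂ] X := (ContinuousLinearMap.apply ℂ X x₁).comp E.subtypeL with hf1
  set f2 : E →L[ℂ] X := (ContinuousLinearMap.apply ℂ X x₂).comp E.subtypeL with hf2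
  have f1app : ∀ e : E, f1 e = (e : X →L[ℂ] X) x₁ := fun e => rfl
  have f2app : ∀ e : E, f2 e = (e : X →L[ℂ] X) x₂ := fun e => rfl
  set p : Submodule ℂ X := LinearMap.range (f1 : E →ₗ[ℂ] X) with hpdef
  set q : Submodule ℂ X := LinearMap.range (f2 : E →ₗ[ℂ] X) with hqdef
  have hpset : (p : Set X) = {y : X | ∃ a ∈ A, a x₁ = y} := by
    ext y
    constructor
    · rintro ⟨e, rfl⟩; exact ⟨e, e.2, rfl⟩
    · rintro ⟨a, ha, rfl⟩; exact ⟨⟨a, ha⟩, rfl⟩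
  have hqset : (q : Set X) = {y : X | ∃ a ∈ A, a x₂ = y} := by
    ext y
    constructor
    · rintro ⟨e, rfl⟩; exact ⟨e, e.2, rfl⟩
    · rintro ⟨a, ha, rfl⟩; exact ⟨⟨a, ha⟩, rfl⟩
  have hp : IsClosed (p : Set X) := by rw [hpset]; exact hc1
  have hq : IsClosed (q : Set X) := by rw [hqset]; exact hc2
  have hcompl : IsCompl p q := by
    constructor
    · rw [Submodule.disjoint_def]
      rintro z ⟨e, rfl⟩ ⟨e', he'⟩
      have h0 : (e : X →L[ℂ] X) x₁ + (-(e' : X →L[ℂ] X)) x₂ = 0 := by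
        simp only [ContinuousLinearMap.coe_coe] at he'
        rw [f1app] at *
        rw [f2app] at he'
        simp [← he']
      have := hind _ e.2 _ (neg_mem e'.2) h0
      simpa [f1app] using this.1
    · rw [codisjoint_iff, eq_top_iff]
      intro y _
      obtain ⟨a, ha, b, hb, hy⟩ := hspan y
      rw [hy]
      exact Submodule.add_mem_sup ⟨⟨a, ha⟩, rfl⟩ ⟨⟨b, hb⟩, rfl⟩
  set Q : X →L[ℂ] q := q.linearProjOfClosedCompl p hcompl.symm hq hp with hQ
  have hQdecomp : ∀ y : X, y - (Q y : X) ∈ p := by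
    intro y
    have : (p.linearProjOfIsCompl q hcompl y : X) + (q.linearProjOfIsCompl p hcompl.symm y : X) = y := by
      exact Submodule.projection_add_projection_eq_self hcompl y
    have hQy : (Q y : X) = (q.linearProjOfIsCompl p hcompl.symm y : X) := by
      rw [hQ]; rfl
    rw [hQy]
    have h3 : (p.linearProjOfIsCompl q hcompl y : X)
        = y - (q.linearProjOfIsCompl p hcompl.symm y : X) := eq_sub_of_add_eq this
    rw [← h3]
    exact (p.linearProjOfIsCompl q hcompl y).2
  haveI : CompleteSpace q := hq.completeSpace_coe
  -- open mapping: bounded right inverse for e ↦ e x₂ onto q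
  set f2' : E →L[ℂ] q := f2.codRestrict q (fun e => ⟨e, rfl⟩) with hf2'
  have hsurj : Function.Surjective f2' := by
    rintro ⟨w, e, he⟩
    exact ⟨e, Subtype.ext he⟩
  obtain ⟨C, hCpos, hC⟩ := ContinuousLinearMap.exists_preimage_norm_le f2' (E := E) (F := q) (σ' := RingHom.id ℂ) hsurj
  set K : ℝ := C * ‖Q‖ * ‖x₂‖ with hK
  have hKnn : 0 ≤ K := by positivity
  -- key estimate : for a ∈ I₁, b ∈ I₂, ‖a‖ ≤ K * ‖a + b‖
  have key : ∀ a ∈ A, ∀ b ∈ A, a x₁ = 0 → b x₂ = 0 → ‖a‖ ≤ K * ‖a + b‖ := by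
    intro a ha b hb hax hbx
    refine ContinuousLinearMap.opNorm_le_bound _ (by positivity) fun y => ?_
    obtain ⟨e, hev, hen⟩ := hC (Q y)
    set v : X →L[ℂ] X := (e : X →L[ℂ] X) with hv
    have hvx2 : v x₂ = (Q y : X) := congrArg Subtype.val hev
    obtain ⟨e1, he1⟩ := hQdecomp y
    set u : X →L[ℂ] X := (e1 : X →L[ℂ] X) with hu
    have hyeq : y = u x₁ + v x₂ := by
      simp only [ContinuousLinearMap.coe_coe] at he1
      rw [hvx2, f1app] at *
      rw [← hu] at he1
      rw [he1]; abel
    have hau : a (u x₁) = 0 := by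
      have : a * u = u * a := hcomm a ha u e1.2
      calc a (u x₁) = (a * u) x₁ := rfl
        _ = (u * a) x₁ := by rw [this]
        _ = u (a x₁) := rfl
        _ = 0 := by rw [hax]; simp
    have hav : a (v x₂) = v ((a + b) x₂) := by
      have hcv : a * v = v * a := hcomm a ha v e.2
      have : (a + b) x₂ = a x₂ := by simp [hbx]
      calc a (v x₂) = (a * v) x₂ := rfl
        _ = (v * a) x₂ := by rw [hcv]
        _ = v (a x₂) := rfl
        _ = v ((a + b) x₂) := by rw [this]
    have hay : a y = v ((a + b) x₂) := by
      rw [hyeq]; rw [map_add, hau, hav]; simp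
    have hQyn : ‖(Q y : X)‖ ≤ ‖Q‖ * ‖y‖ := by
      have := Q.le_opNorm y
      simpa using this
    have hvn : ‖v‖ ≤ C * (‖Q‖ * ‖y‖) := by
      have h1 : ‖v‖ = ‖e‖ := rfl
      have h2 : ‖Q y‖ = ‖(Q y : X)‖ := rfl
      rw [h1]
      refine hen.trans ?_
      rw [h2]
      exact mul_le_mul_of_nonneg_left hQyn (le_of_lt hCpos)
    calc ‖a y‖ = ‖v ((a + b) x₂)‖ := by rw [hay]
      _ ≤ ‖v‖ * ‖(a + b) x₂‖ := v.le_opNorm _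
      _ ≤ (C * (‖Q‖ * ‖y‖)) * (‖a + b‖ * ‖x₂‖) := by
          apply mul_le_mul hvn ((a + b).le_opNorm x₂) (norm_nonneg _)
          positivity
      _ = K * ‖a + b‖ * ‖y‖ := by rw [hK]; ring
  -- now closedness via sequences
  apply IsSeqClosed.isClosed
  intro s c hs hlim
  choose as has bs hbs hax hbx hsum using hs
  have hcs : CauchySeq s := hlim.cauchySeq
  have hcauchy : CauchySeq as := by
    rw [Metric.cauchySeq_iff] at hcs ⊢
    intro ε hε
    obtain ⟨N, hN⟩ := hcs (ε / (K + 1)) (by positivity)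
    refine ⟨N, fun m hm n hn => ?_⟩
    have hd := hN m hm n hn
    have hab : ‖as m - as n‖ ≤ K * ‖(as m - as n) + (bs m - bs n)‖ := by
      apply key _ (sub_mem (has m) (has n)) _ (sub_mem (hbs m) (hbs n))
      · simp [hax m, hax n]
      · simp [hbx m, hbx n]
    have heq : (as m - as n) + (bs m - bs n) = s m - s n := by
      rw [hsum m, hsum n]; abel
    rw [heq] at hab
    rw [dist_eq_norm] at hd ⊢
    calc ‖as m - as n‖ ≤ K * ‖s m - s n‖ := hab
      _ ≤ K * (ε / (K + 1)) := by
          apply mul_le_mul_of_nonneg_left (le_of_lt hd) hKnn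
      _ < (K + 1) * (ε / (K + 1)) := by
          apply mul_lt_mul_of_pos_right (by linarith) (by positivity)
      _ = ε := by field_simp
  obtain ⟨a, halim⟩ := cauchySeq_tendsto_of_complete hcauchy
  have hblim : Filter.Tendsto (fun n => s n - as n) Filter.atTop (nhds (c - a)) :=
    hlim.sub halim
  have haA : a ∈ A := hA.mem_of_tendsto halim (Filter.Eventually.of_forall has)
  have hbA : c - a ∈ A := hA.mem_of_tendsto hblim
    (Filter.Eventually.of_forall fun n => by
      have : s n - as n = bs n := by rw [hsum n]; abel
      rw [this]; exact hbs n)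
  have hax0 : a x₁ = 0 := by
    have h1 : Filter.Tendsto (fun n => (as n) x₁) Filter.atTop (nhds (a x₁)) :=
      ((ContinuousLinearMap.apply ℂ X x₁).continuous.tendsto a).comp halim
    have h2 : (fun n => (as n) x₁) = fun _ => (0 : X) := funext fun n => hax n
    rw [h2] at h1
    exact tendsto_nhds_unique h1 tendsto_const_nhds
  have hbx0 : (c - a) x₂ = 0 := by
    have h1 : Filter.Tendsto (fun n => (s n - as n) x₂) Filter.atTop
        (nhds ((c - a) x₂)) :=
      ((ContinuousLinearMap.apply ℂ X x₂).continuous.tendsto (c - a)).comp hblim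
    have h2 : (fun n => (s n - as n) x₂) = fun _ => (0 : X) := by
      funext n
      have : s n - as n = bs n := by rw [hsum n]; abel
      rw [this]; exact hbx n
    rw [h2] at h1
    exact tendsto_nhds_unique h1 tendsto_const_nhds
  exact ⟨a, haA, c - a, hbA, hax0, hbx0, by abel⟩
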